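/- Let f be a real number with −1/2 < f < 0 and set y* = −f/(1+f), so 0 < y* < 1. Then for every real r with 0 < r < min(y*, 1−y*), the circle integral ∮_{|y−y*|=r} θ(y)·Ψ̂_0(y;f) dy equals 0. Equivalently, the residue of θ(y)Ψ_0(y;f) at the ramification point y = −f/(1+f) is 0. -/

import Mathlib

set_option maxRecDepth 8000

open Complex

/-- The functions `Ψ̂_n(·;f)`, defined recursively by
`Ψ̂_0(y;f) = -1/(f+(f+1)y)^2` and
`Ψ̂_n(y;f) = -(d/dy)[Ψ̂_{n-1}(y;f) · y(y+1)/(f+(f+1)y)]`. -/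
noncomputable def PsiHat (f : ℂ) : ℕ → ℂ → ℂ
  | 0 => fun y => -1 / (f + (f + 1) * y) ^ 2
  | n + 1 => fun y =>
      -deriv (fun w => PsiHat f n w * (w * (w + 1) / (f + (f + 1) * w))) y

/-- The primitive `θ(y) = (f/2)(log y)^2 + (log y)·log(1+y) + Li₂(-y)`,
with `log` the principal branch and `Li₂(w) = ∑_{k≥1} w^k/k^2`. -/
noncomputable def theta (f : ℂ) (y : ℂ) : ℂ :=
  f / 2 * Complex.log y ^ 2 + Complex.log y * Complex.log (1 + y) +
    ∑' k : ℕ, (-y) ^ (k + 1) / ((k : ℂ) + 1) ^ 2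

open Metric in
lemma hasDerivAt_dilog {y : ℂ} (h1 : ‖y‖ < 1) (hy0 : y ≠ 0) :
    HasDerivAt (fun z : ℂ => ∑' k : ℕ, (-z) ^ (k + 1) / ((k : ℂ) + 1) ^ 2)
      (-Complex.log (1 + y) / y) y := by
  set ρ : ℝ := (1 + ‖y‖) / 2 with hρ
  have hρ0 : 0 ≤ ρ := by positivity
  have hρ1 : ρ < 1 := by simp only [hρ]; linarith
  have hyρ : ‖y‖ < ρ := by simp only [hρ]; linarith
  have hn0 : ∀ n : ℕ, ((n : ℂ) + 1) ≠ 0 := fun n => Nat.cast_add_one_ne_zero n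
  have key := hasDerivAt_tsum_of_isPreconnected
    (u := fun n : ℕ => ρ ^ n) (t := ball (0 : ℂ) ρ)
    (g := fun (n : ℕ) (z : ℂ) => (-z) ^ (n + 1) / ((n : ℂ) + 1) ^ 2)
    (g' := fun (n : ℕ) (z : ℂ) => (-1) ^ (n + 1) * z ^ n / ((n : ℂ) + 1))
    (summable_geometric_of_lt_one hρ0 hρ1) isOpen_ball (convex_ball _ _).isPreconnected
    (fun n z _ => by
      have h := ((hasDerivAt_pow (n + 1) (-z)).comp z (hasDerivAt_neg z)).div_const
        (((n : ℂ) + 1) ^ 2)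
      refine h.congr_deriv ?_
      have hn := hn0 n
      rw [Nat.add_sub_cancel, neg_pow]
      push_cast
      field_simp
      ring)
    (fun n z hz => by
      rw [mem_ball, dist_zero_right] at hz
      have : ‖(-1 : ℂ) ^ (n + 1) * z ^ n / ((n : ℂ) + 1)‖ = ‖z‖ ^ n / ‖((n : ℂ) + 1)‖ := by
        simp [norm_div, norm_pow]
      rw [this]
      have h1' : (1 : ℝ) ≤ ‖((n : ℂ) + 1)‖ := by
        have : ((n : ℂ) + 1) = ((n + 1 : ℕ) : ℂ) := by push_cast; ring
        rw [this, Complex.norm_natCast]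
        exact_mod_cast Nat.one_le_iff_ne_zero.mpr (Nat.succ_ne_zero n)
      calc ‖z‖ ^ n / ‖((n : ℂ) + 1)‖ ≤ ‖z‖ ^ n / 1 := by
            gcongr
        _ = ‖z‖ ^ n := by ring
        _ ≤ ρ ^ n := pow_le_pow_left₀ (norm_nonneg z) hz.le n
    )
    (mem_ball_self (lt_of_le_of_lt (norm_nonneg y) hyρ))
    (by
      have : (fun n : ℕ => (-(0:ℂ)) ^ (n + 1) / ((n : ℂ) + 1) ^ 2) = fun _ => 0 := by
        funext n; simp
      rw [this]; exact summable_zero)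
    (by rwa [mem_ball, dist_zero_right])
  -- identify the sum of derivatives
  have hs := Complex.hasSum_taylorSeries_log h1
  have hshift : HasSum (fun n : ℕ => (-1 : ℂ) ^ (n + 1 + 1) * y ^ (n + 1) / ((n : ℕ) + 1 : ℂ))
      (Complex.log (1 + y)) := by
    have := (hasSum_nat_add_iff' (f := fun n : ℕ => (-1 : ℂ) ^ (n + 1) * y ^ n / (n : ℂ)) 1).mpr hs
    simpa using this
  have hmul := hshift.mul_left (-1 / y)
  have heq : (fun n : ℕ => (-1 / y) * ((-1 : ℂ) ^ (n + 1 + 1) * y ^ (n + 1) / ((n : ℕ) + 1 : ℂ)))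
      = fun n : ℕ => (-1 : ℂ) ^ (n + 1) * y ^ n / ((n : ℂ) + 1) := by
    funext n
    have hn := hn0 n
    field_simp
    ring
  rw [heq] at hmul
  have hts : (∑' n : ℕ, (-1 : ℂ) ^ (n + 1) * y ^ n / ((n : ℂ) + 1)) = -Complex.log (1 + y) / y := by
    rw [hmul.tsum_eq]; ring
  rw [hts] at key
  exact key

lemma hasDerivAt_theta(f : ℂ) {y : ℂ} (hre : 0 < y.re) (h1 : ‖y‖ < 1) :
    HasDerivAt (theta f) (Complex.log y * (f + (f + 1) * y) / (y * (y + 1))) y := by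
  have hy0 : y ≠ 0 := fun h => by simp [h] at hre
  have hre1 : 0 < (1 + y).re := by simp only [Complex.add_re, Complex.one_re]; linarith
  have hy1 : 1 + y ≠ 0 := fun h => by simp [h] at hre1
  have hy1' : y + 1 ≠ 0 := by rwa [add_comm] at hy1
  have hsl : y ∈ Complex.slitPlane := Or.inl hre
  have hsl1 : (1 + y) ∈ Complex.slitPlane := Or.inl hre1
  have hlog : HasDerivAt Complex.log y⁻¹ y := Complex.hasDerivAt_log hsl
  have hlog1 : HasDerivAt (fun z : ℂ => Complex.log (1 + z)) (1 + y)⁻¹ y := by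
    have := (Complex.hasDerivAt_log hsl1).comp y ((hasDerivAt_id y).const_add 1)
    simpa [Function.comp_def] using this
  have hA : HasDerivAt (fun z : ℂ => f / 2 * Complex.log z ^ 2)
      (f / 2 * (2 * Complex.log y ^ 1 * y⁻¹)) y := (hlog.pow 2).const_mul _
  have hB : HasDerivAt (fun z : ℂ => Complex.log z * Complex.log (1 + z))
      (y⁻¹ * Complex.log (1 + y) + Complex.log y * (1 + y)⁻¹) y := hlog.mul hlog1
  have hL := hasDerivAt_dilog h1 hy0
  have hsum := (hA.add hB).add hL
  have : HasDerivAt (theta f)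
      (f / 2 * (2 * Complex.log y ^ 1 * y⁻¹) +
        (y⁻¹ * Complex.log (1 + y) + Complex.log y * (1 + y)⁻¹) +
        -Complex.log (1 + y) / y) y := hsum
  convert this using 1
  rw [pow_one]
  field_simp
  ring

open Metric in
/-- Lemma 3.2, `n = 0` case: the residue of `θ(y)Ψ_0(y;f)` at the ramification
point `y* = -f/(1+f)` vanishes, i.e. the circle integral of `θ · Ψ̂_0` around
any sufficiently small circle centered at `y*` is `0`. -/
theorem residue_theta_psi_zero
    (f : ℝ) (hf₁ : -1/2 < f) (hf₂ : f < 0) (r : ℝ) (hr : 0 < r)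
    (hr' : r < min (-f / (1 + f)) (1 - -f / (1 + f))) :
    (∮ y in C(((-f / (1 + f) : ℝ) : ℂ), r),
        theta (f : ℂ) y * PsiHat (f : ℂ) 0 y) = 0 := by
  set x : ℝ := -f / (1 + f) with hxdef
  have hf1 : (0:ℝ) < 1 + f := by linarith
  have hx0 : 0 < x := div_pos (by linarith) hf1
  have hx1 : x < 1 := by
    rw [hxdef, div_lt_one hf1]; linarith
  have hrx : r < x := lt_of_lt_of_le hr' (min_le_left _ _)
  have hrx1 : r < 1 - x := lt_of_lt_of_le hr' (min_le_right _ _)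
  set F : ℂ := (f : ℂ) with hFdef
  set c : ℂ := ((x : ℝ) : ℂ) with hcdef
  have hF1 : F + 1 ≠ 0 := by
    rw [hFdef]
    intro h
    have : (f : ℂ) = -1 := by linear_combination h
    have : f = -1 := by exact_mod_cast this
    linarith
  have hcre : c.re = x := by simp [hcdef]
  have hcim : c.im = 0 := by simp [hcdef]
  have hnormc : ‖c‖ = x := by
    rw [hcdef, Complex.norm_real, Real.norm_eq_abs, abs_of_pos hx0]
  -- key factorization
  have hfac : ∀ y : ℂ, F + (F + 1) * y = (F + 1) * (y - c) := by
    intro y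
    have hc : (F + 1) * c = -F := by
      rw [hcdef, hxdef, hFdef]
      push_cast
      have : (1 : ℂ) + f ≠ 0 := by
        intro h
        have : (f:ℝ) = -1 := by exact_mod_cast (by linear_combination h : (f:ℂ) = -1)
        linarith
      field_simp
      ring
    linear_combination hc
  -- facts on the closed ball
  have hball : ∀ y ∈ closedBall c r, 0 < y.re ∧ ‖y‖ < 1 := by
    intro y hy
    rw [mem_closedBall, Complex.dist_eq] at hy
    constructor
    · have h1 : |(y - c).re| ≤ ‖y - c‖ := Complex.abs_re_le_norm _
      have h2 : (y - c).re = y.re - x := by simp [Complex.sub_re, hcre]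
      have : |y.re - x| ≤ r := by rw [← h2]; exact h1.trans hy
      have := abs_le.mp this
      linarith [this.1]
    · calc ‖y‖ = ‖c + (y - c)‖ := by ring_nf
        _ ≤ ‖c‖ + ‖y - c‖ := norm_add_le _ _
        _ ≤ x + r := by
            rw [hnormc]
            have : ‖y - c‖ ≤ r := by rwa []
            linarith
        _ < 1 := by linarith
  -- the correction function G and the primitive Φ
  set G : ℂ → ℂ := fun y => Complex.log y / ((F + 1) * (y * (y + 1))) with hGdef
  set Φ : ℂ → ℂ := fun y => theta F y / ((F + 1) * (F + (F + 1) * y)) with hΦdef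
  -- nonvanishing facts
  have hden : ∀ y ∈ closedBall c r, y ≠ 0 ∧ y + 1 ≠ 0 := by
    intro y hy
    obtain ⟨hre, _⟩ := hball y hy
    refine ⟨fun h => by simp [h] at hre, fun h => ?_⟩
    have : (y + 1).re = y.re + 1 := by simp
    rw [h] at this
    simp at this
    linarith
  -- G is differentiable on the closed ball
  have hGdiff : ∀ y ∈ closedBall c r, DifferentiableAt ℂ G y := by
    intro y hy
    obtain ⟨hre, _⟩ := hball y hy
    obtain ⟨hy0, hy1⟩ := hden y hy
    have hsl : y ∈ Complex.slitPlane := Or.inl hre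
    refine DifferentiableAt.div (Complex.differentiableAt_log hsl) (by fun_prop) ?_
    exact mul_ne_zero hF1 (mul_ne_zero hy0 hy1)
  have hGcont : ContinuousOn G (closedBall c r) := fun y hy =>
    (hGdiff y hy).continuousAt.continuousWithinAt
  have hG0 : (∮ y in C(c, r), G y) = 0 :=
    Complex.circleIntegral_eq_zero_of_differentiable_on_off_countable hr.le
      Set.countable_empty hGcont (fun y hy => hGdiff y (ball_subset_closedBall hy.1))
  -- derivative of Φ on the sphere
  have hΦderiv : ∀ y ∈ sphere c r,
      HasDerivAt Φ (theta F y * PsiHat F 0 y + G y) y := by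
    intro y hy
    have hy' : y ∈ closedBall c r := sphere_subset_closedBall hy
    obtain ⟨hre, h1⟩ := hball y hy'
    obtain ⟨hy0, hy1⟩ := hden y hy'
    have hyc : y ≠ c := by
      intro h
      rw [mem_sphere, h, dist_self] at hy
      exact hr.ne hy
    have hq : F + (F + 1) * y ≠ 0 := by
      rw [hfac]
      exact mul_ne_zero hF1 (sub_ne_zero.mpr hyc)
    have hθ := hasDerivAt_theta F hre h1
    have hD : HasDerivAt (fun z : ℂ => (F + 1) * (F + (F + 1) * z))
        ((F + 1) * ((F + 1) * 1)) y :=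
      (((hasDerivAt_id y).const_mul (F + 1)).const_add F).const_mul (F + 1)
    have hne : (F + 1) * (F + (F + 1) * y) ≠ 0 := mul_ne_zero hF1 hq
    have hdiv := hθ.div hD hne
    refine (hdiv.congr_deriv ?_ : _)
    simp only [PsiHat, G]
    field_simp
    ring
  have hsum0 : (∮ y in C(c, r), (theta F y * PsiHat F 0 y + G y)) = 0 :=
    circleIntegral.integral_eq_zero_of_hasDerivWithinAt hr.le
      (fun y hy => ((hΦderiv y hy).hasDerivWithinAt))
  -- integrability
  have hcont1 : ContinuousOn (fun y => theta F y * PsiHat F 0 y + G y) (sphere c r) := by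
    intro y hy
    have hy' : y ∈ closedBall c r := sphere_subset_closedBall hy
    obtain ⟨hre, h1⟩ := hball y hy'
    obtain ⟨hy0, hy1⟩ := hden y hy'
    have hyc : y ≠ c := by
      intro h
      rw [mem_sphere, h, dist_self] at hy
      exact hr.ne hy
    have hq : F + (F + 1) * y ≠ 0 := by
      rw [hfac]
      exact mul_ne_zero hF1 (sub_ne_zero.mpr hyc)
    have hθc : ContinuousAt (theta F) y := (hasDerivAt_theta F hre h1).continuousAt
    have hqc : ContinuousAt (fun y => PsiHat F 0 y) y := by
      simp only [PsiHat]
      exact continuousAt_const.div (by fun_prop) (pow_ne_zero 2 hq)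
    exact ((hθc.mul hqc).add (hGdiff y hy').continuousAt).continuousWithinAt
  have hI1 : CircleIntegrable (fun y => theta F y * PsiHat F 0 y + G y) c r :=
    ContinuousOn.circleIntegrable hr.le hcont1
  have hI2 : CircleIntegrable G c r :=
    ContinuousOn.circleIntegrable hr.le (hGcont.mono sphere_subset_closedBall)
  have hEq : Set.EqOn (fun y => theta F y * PsiHat F 0 y)
      (fun y => (theta F y * PsiHat F 0 y + G y) - G y) (sphere c r) := fun y _ => by ring
  calc (∮ y in C(c, r), theta F y * PsiHat F 0 y)
      = ∮ y in C(c, r), ((theta F y * PsiHat F 0 y + G y) - G y) :=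
        circleIntegral.integral_congr hr.le hEq
    _ = (∮ y in C(c, r), (theta F y * PsiHat F 0 y + G y)) - ∮ y in C(c, r), G y :=
        circleIntegral.integral_sub hI1 hI2
    _ = 0 := by rw [hsum0, hG0, sub_zero]
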